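/- For a natural number m ≥ 1, there exist natural numbers r and i with i ≥ 1, r + i = m, and the binomial coefficient C(r, i) odd, if and only if m + 1 is not a power of 2. -/

import Mathlib

lemma odd_choose_iff : ∀ n k : ℕ, Odd (n.choose k) ↔ ∀ j, k.testBit j = true → n.testBit j = true := by
  intro n
  induction n using Nat.strong_induction_on with
  | _ n ih =>
    intro k
    rcases Nat.eq_zero_or_pos n with rfl | hn
    · constructor
      · rintro h j hj
        rcases Nat.eq_zero_or_pos k with rfl | hk
        · simp at hj
        · rw [Nat.choose_eq_zero_of_lt hk] at h; simp at h
      · intro h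
        have hk : k = 0 := by
          apply Nat.zero_of_testBit_eq_false
          intro i
          by_contra hc
          have := h i (by simpa using hc)
          simp at this
        subst hk; simp
    · have : Fact (Nat.Prime 2) := ⟨Nat.prime_two⟩
      have luc := Choose.choose_modEq_choose_mod_mul_choose_div_nat (p := 2) (n := n) (k := k)
      have hmod : n.choose k % 2 = ((n % 2).choose (k % 2) * ((n / 2).choose (k / 2))) % 2 := luc
      have step : Odd (n.choose k) ↔
          Odd ((n % 2).choose (k % 2)) ∧ Odd ((n / 2).choose (k / 2)) := by
        rw [Nat.odd_iff, hmod, ← Nat.odd_iff, Nat.odd_mul]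
      rw [step, ih (n / 2) (by omega) (k / 2)]
      have h0 : Odd ((n % 2).choose (k % 2)) ↔ (k.testBit 0 = true → n.testBit 0 = true) := by
        have hn2 : n % 2 = 0 ∨ n % 2 = 1 := by omega
        have hk2 : k % 2 = 0 ∨ k % 2 = 1 := by omega
        rcases hn2 with h1 | h1 <;> rcases hk2 with h2 | h2 <;>
          simp [h1, h2, Nat.testBit_zero]
      rw [h0]
      constructor
      · rintro ⟨ha, hb⟩ j hj
        cases j with
        | zero => exact ha hj
        | succ j =>
          rw [Nat.testBit_succ] at hj ⊢
          exact hb j hj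
      · intro h
        refine ⟨h 0, fun j hj => ?_⟩
        rw [← Nat.testBit_succ] at hj ⊢
        exact h (j+1) hj

lemma all_ones_pow (m : ℕ) (hm : 1 ≤ m)
    (h : ∀ z, m.testBit (z+1) = true → m.testBit z = true) : ∃ t, m + 1 = 2 ^ t := by
  induction m using Nat.strong_induction_on with
  | _ m ih =>
    have hodd : m % 2 = 1 := by
      by_contra hc
      have h0 : m.testBit 0 = false := by simp [Nat.testBit_zero]; omega
      have hall : ∀ z, m.testBit z = false := by
        intro z
        induction z with
        | zero => exact h0
        | succ z ihz =>
          by_contra hc2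
          have := h z (by simpa using hc2)
          simp [ihz] at this
      have := Nat.zero_of_testBit_eq_false hall
      omega
    rcases Nat.eq_or_lt_of_le hm with h1 | h1
    · exact ⟨1, by omega⟩
    · have hm2 : 1 ≤ m / 2 := by omega
      have hlt : m / 2 < m := by omega
      obtain ⟨t, ht⟩ := ih (m / 2) hlt hm2 (fun z hz => by
        rw [← Nat.testBit_succ] at hz ⊢
        exact h (z+1) hz)
      exact ⟨t + 1, by omega⟩

theorem stmt4 (m : ℕ) (hm : 1 ≤ m) :
    (∃ r i : ℕ, 1 ≤ i ∧ r + i = m ∧ Odd (Nat.choose r i)) ↔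
      ¬ ∃ t : ℕ, m + 1 = 2 ^ t := by
  constructor
  · rintro ⟨r, i, hi, hri, hodd⟩ ⟨t, ht⟩
    rw [odd_choose_iff] at hodd
    have hiz : i ≠ 0 := by omega
    have hex : ∃ b, i.testBit b = true := by
      by_contra hc
      push_neg at hc
      exact hiz (Nat.zero_of_testBit_eq_false (fun j => by
        have := hc j; simpa using this))
    classical
    set b := Nat.find hex with hbdef
    have hb : i.testBit b = true := Nat.find_spec hex
    have hbmin : ∀ j, j < b → i.testBit j = false := fun j hj => by
      have := Nat.find_min hex hj
      simpa using this
    -- 2^b ≤ i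
    have hdiv : i / 2 ^ b % 2 = 1 := by
      have := hb
      rw [Nat.testBit_eq_decide_div_mod_eq] at this
      simpa using this
    have hile : 2 ^ b ≤ i := Nat.ge_two_pow_of_testBit hb
    have hbt : b < t := by
      have h1 : 2 ^ b < 2 ^ t := by omega
      exact (Nat.pow_lt_pow_iff_right (by norm_num)).mp h1
    -- i % 2^b = 0
    have himod : i % 2 ^ b = 0 := by
      apply Nat.eq_of_testBit_eq
      intro j
      rw [Nat.testBit_mod_two_pow]
      rcases Nat.lt_or_ge j b with hj | hj
      · simp [hbmin j hj]
      · simp [Nat.not_lt.mpr hj]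
    -- i % 2^(b+1) = 2^b
    have himod2 : i % 2 ^ (b + 1) = 2 ^ b := by
      rw [Nat.mod_pow_succ, himod, hdiv]
      ring
    -- r bits
    have hrb : r.testBit b = true := hodd b hb
    have hrdiv : r / 2 ^ b % 2 = 1 := by
      rw [Nat.testBit_eq_decide_div_mod_eq] at hrb
      simpa using hrb
    have hrmod2 : r % 2 ^ (b + 1) = r % 2 ^ b + 2 ^ b := by
      rw [Nat.mod_pow_succ, hrdiv]
      ring
    have hclt : r % 2 ^ b < 2 ^ b := Nat.mod_lt _ (pow_pos (by norm_num) b)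
    -- m % 2^(b+1) = r % 2^b
    have hmmod : m % 2 ^ (b + 1) = r % 2 ^ b := by
      have : m % 2 ^ (b + 1) = (r % 2 ^ (b + 1) + i % 2 ^ (b + 1)) % 2 ^ (b + 1) := by
        rw [← Nat.add_mod, hri]
      rw [this, hrmod2, himod2]
      have h2 : r % 2 ^ b + 2 ^ b + 2 ^ b = r % 2 ^ b + 2 ^ (b + 1) := by ring
      rw [h2, Nat.add_mod_right, Nat.mod_eq_of_lt (by
        have : (2:ℕ) ^ b ≤ 2 ^ (b+1) := Nat.pow_le_pow_right (by norm_num) (by omega)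
        omega)]
    -- testBit m b
    have hmb1 : m.testBit b = true := by
      have : m = 2 ^ t - 1 := by omega
      rw [this, Nat.testBit_two_pow_sub_one]
      simpa using hbt
    have hmb2 : m.testBit b = false := by
      have h1 : (m % 2 ^ (b+1)).testBit b = m.testBit b := by
        rw [Nat.testBit_mod_two_pow]
        simp
      rw [← h1, hmmod]
      exact Nat.testBit_eq_false_of_lt hclt
    rw [hmb1] at hmb2
    simp at hmb2
  · intro hpow
    -- show pattern bit exists, else m+1 is power of two
    have hpat : ∃ z, m.testBit z = false ∧ m.testBit (z+1) = true := by
      by_contra hnp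
      push_neg at hnp
      apply hpow
      apply all_ones_pow m hm
      intro z hz
      by_contra hzf
      have := hnp z (by simpa using hzf)
      simp [hz] at this
    obtain ⟨z, hz0, hz1⟩ := hpat
    set r := m - 2 ^ z with hrdef
    have hle : 2 ^ (z+1) ≤ m := Nat.ge_two_pow_of_testBit hz1
    have hzle : 2 ^ z ≤ m := le_trans (Nat.pow_le_pow_right (by norm_num) (by omega)) hle
    refine ⟨r, 2 ^ z, Nat.one_le_two_pow, by omega, ?_⟩
    rw [odd_choose_iff]
    intro j hj
    rw [Nat.testBit_two_pow] at hj
    have hjz : z = j := by simpa using hj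
    subst hjz
    -- show testBit r z = true, i.e. r / 2^z odd
    rw [Nat.testBit_eq_decide_div_mod_eq]
    -- decompose m
    have hmz0 : m / 2 ^ z % 2 = 0 := by
      rw [Nat.testBit_eq_decide_div_mod_eq] at hz0
      simp at hz0
      omega
    have hmz1 : m / 2 ^ (z+1) % 2 = 1 := by
      rw [Nat.testBit_eq_decide_div_mod_eq] at hz1
      simpa using hz1
    -- r / 2^z = m / 2^z - 1
    set q := m / 2 ^ z with hqdef
    have hq2 : q / 2 % 2 = 1 := by
      rw [hqdef, Nat.div_div_eq_div_mul, ← pow_succ]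
      exact hmz1
    have hsplit : m = 2 ^ z * q + m % 2 ^ z := (Nat.div_add_mod m (2 ^ z)).symm
    have hslt : m % 2 ^ z < 2 ^ z := Nat.mod_lt _ (pow_pos (by norm_num) _)
    clear_value q r
    have hqge : 2 ≤ q := by omega
    obtain ⟨p, hp⟩ : ∃ p, q = p + 1 := ⟨q - 1, by omega⟩
    have h1 : 2 ^ z * q = 2 ^ z * (q - 1) + 2 ^ z := by
      subst hp
      rw [Nat.add_sub_cancel, Nat.mul_add, Nat.mul_one]
    have hr : r = 2 ^ z * (q - 1) + m % 2 ^ z := by omega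
    have hrq : r / 2 ^ z = q - 1 := by
      rw [hr, Nat.mul_add_div (pow_pos (by norm_num) _),
        Nat.div_eq_of_lt hslt]
      omega
    rw [hrq]
    simp only [decide_eq_true_eq]
    omega
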